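/- Let A be a commutative noetherian local ring with maximal ideal 𝔪 and residue field k, and let E = E(A, k) be the injective hull of k. Then the canonical map from the 𝔪-adic completion of A to Hom_A(E, E), sending a to multiplication by a, is an isomorphism of rings. -/

import Mathlib

universe u
set_option linter.unusedSectionVars false

open IsLocalRing Submodule

namespace MatlisAux

variable {A : Type u} [CommRing A] [IsNoetherianRing A] [IsLocalRing A]
  {E : Type u} [AddCommGroup E] [Module A E]

local notation "𝔪" => IsLocalRing.maximalIdeal A

theorem resSimple : IsSimpleModule A (ResidueField A) :=
  (isSimpleModule_iff_isCoatom (m := (𝔪 : Submodule A A))).mpr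
    (Ideal.isMaximal_def.mp (maximalIdeal.isMaximal A))

section withι

variable (ι : IsLocalRing.ResidueField A →ₗ[A] E)

theorem smul_res (m : A) (hm : m ∈ 𝔪) (u : ResidueField A) : m • u = 0 := by
  rw [Algebra.smul_def, IsLocalRing.ResidueField.algebraMap_eq]
  have : IsLocalRing.residue A m = 0 := Ideal.Quotient.eq_zero_iff_mem.mpr hm
  rw [this, zero_mul]

theorem smul_S (m : A) (hm : m ∈ 𝔪) (u : ResidueField A) : m • ι u = 0 := by
  rw [← map_smul, smul_res m hm, map_zero]

variable (hmono : Function.Injective ι)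

include hmono in
theorem S_simple : IsSimpleModule A (LinearMap.range ι) :=
  have := resSimple (A := A)
  IsSimpleModule.congr (LinearEquiv.ofInjective ι hmono).symm

include hmono in
theorem one_ne : ι (IsLocalRing.residue A 1) ≠ 0 := by
  intro h
  have h1 : IsLocalRing.residue A 1 = 0 := by
    apply hmono; rw [h, map_zero]
  rw [map_one] at h1
  exact one_ne_zero h1

include hmono in
theorem mem_m_of_smul {a : A} {s : E} (hs : s ∈ LinearMap.range ι) (hs0 : s ≠ 0)
    (h : a • s = 0) : a ∈ 𝔪 := by
  obtain ⟨u, rfl⟩ := hs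
  have hu : u ≠ 0 := fun hu => hs0 (by rw [hu, map_zero])
  have : ι (a • u) = 0 := by rw [map_smul]; exact h
  have h2 : a • u = 0 := by
    apply hmono; rw [this, map_zero]
  rw [Algebra.smul_def, IsLocalRing.ResidueField.algebraMap_eq] at h2
  rcases mul_eq_zero.mp h2 with h3 | h3
  · exact Ideal.Quotient.eq_zero_iff_mem.mp h3
  · exact absurd h3 hu

variable (hess : ∀ W : Submodule A E, W ≠ ⊥ → LinearMap.range ι ⊓ W ≠ ⊥)

include hmono hess in
theorem S_le_of_ne_bot {W : Submodule A E} (hW : W ≠ ⊥) : LinearMap.range ι ≤ W := by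
  have hatom : IsAtom (LinearMap.range ι) :=
    isSimpleModule_iff_isAtom.mp (S_simple ι hmono)
  have h1 : LinearMap.range ι ⊓ W ≠ ⊥ := hess W hW
  have h2 : LinearMap.range ι ⊓ W ≤ LinearMap.range ι := inf_le_left
  rcases hatom.le_iff.mp h2 with h3 | h3
  · exact absurd h3 h1
  · rw [← h3]; exact inf_le_right

include hmono hess in
theorem mem_S_of_m_smul {x : E} (hx : ∀ m ∈ 𝔪, m • x = 0) : x ∈ LinearMap.range ι := by
  by_cases hx0 : x = 0
  · rw [hx0]; exact Submodule.zero_mem _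
  -- the cyclic module generated by x is simple
  have hker : LinearMap.ker (LinearMap.toSpanSingleton A E x) = 𝔪 := by
    have hle : (𝔪 : Ideal A) ≤ LinearMap.ker (LinearMap.toSpanSingleton A E x) :=
      fun m hm => by simpa [LinearMap.mem_ker] using hx m hm
    have hne : LinearMap.ker (LinearMap.toSpanSingleton A E x) ≠ ⊤ := by
      intro h
      have : (1 : A) • x = 0 := by
        have : (1 : A) ∈ LinearMap.ker (LinearMap.toSpanSingleton A E x) := h ▸ trivial
        simpa using this
      rw [one_smul] at this; exact hx0 this
    exact ((maximalIdeal.isMaximal A).eq_of_le hne hle).symm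
  have hsimple : IsSimpleModule A (LinearMap.range (LinearMap.toSpanSingleton A E x)) := by
    have e := (LinearMap.toSpanSingleton A E x).quotKerEquivRange
    have : IsSimpleModule A (A ⧸ LinearMap.ker (LinearMap.toSpanSingleton A E x)) := by
      rw [hker]
      exact resSimple
    exact IsSimpleModule.congr e.symm
  have hWbot : LinearMap.range (LinearMap.toSpanSingleton A E x) ≠ ⊥ := by
    intro h
    have : x ∈ LinearMap.range (LinearMap.toSpanSingleton A E x) := ⟨1, one_smul _ _⟩
    rw [h, Submodule.mem_bot] at this
    exact hx0 this
  have hSW := S_le_of_ne_bot ι hmono hess hWbot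
  have : LinearMap.range ι = LinearMap.range (LinearMap.toSpanSingleton A E x) := by
    have hatomW : IsAtom (LinearMap.range (LinearMap.toSpanSingleton A E x)) :=
      isSimpleModule_iff_isAtom.mp hsimple
    have hSne : LinearMap.range ι ≠ ⊥ := by
      intro h
      exact one_ne ι hmono (by
        have : ι (IsLocalRing.residue A 1) ∈ LinearMap.range ι := ⟨_, rfl⟩
        rw [h, Submodule.mem_bot] at this; exact this)
    rcases hatomW.le_iff.mp hSW with h3 | h3
    · exact absurd h3 hSne
    · exact h3
  rw [this]
  exact ⟨1, one_smul _ _⟩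

include hmono hess in
theorem torsion (x : E) : ∃ n : ℕ, ∀ r ∈ (𝔪 ^ n : Ideal A), r • x = 0 := by
  by_cases hx0 : x = 0
  · exact ⟨0, fun r _ => by rw [hx0, smul_zero]⟩
  have hrad : (𝔪 : Ideal A) ≤ Ideal.radical (LinearMap.ker (LinearMap.toSpanSingleton A E x)) := by
    intro c hc
    rw [Ideal.mem_radical_iff]
    by_contra hcon
    push_neg at hcon
    have hpow : ∀ i : ℕ, c ^ i • x ≠ 0 := by
      intro i hi
      exact hcon i (by simpa [LinearMap.mem_ker] using hi)
    -- the chain of annihilators stabilizes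
    have hmonot : Monotone (fun i : ℕ => LinearMap.ker (LinearMap.toSpanSingleton A E (c ^ i • x))) := by
      intro i j hij
      intro a ha
      simp only [LinearMap.mem_ker, LinearMap.toSpanSingleton_apply] at ha ⊢
      have : c ^ j • x = c ^ (j - i) • c ^ i • x := by
        rw [← mul_smul, ← pow_add, Nat.sub_add_cancel hij]
      rw [this, smul_comm, ha, smul_zero]
    obtain ⟨i₀, hi₀⟩ := monotone_stabilizes_iff_noetherian.mpr inferInstance
      ⟨fun i => LinearMap.ker (LinearMap.toSpanSingleton A E (c ^ i • x)), hmonot⟩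
    set y : E := c ^ (i₀ + 1) • x with hy
    have hyne : y ≠ 0 := hpow _
    have hWne : (A ∙ y) ≠ ⊥ := fun h => hyne (Submodule.span_singleton_eq_bot.mp h)
    have hs₀ : ι (IsLocalRing.residue A 1) ∈ (A ∙ y) :=
      S_le_of_ne_bot ι hmono hess hWne ⟨_, rfl⟩
    obtain ⟨a, ha⟩ := Submodule.mem_span_singleton.mp hs₀
    have hcs : c • ι (IsLocalRing.residue A 1) = 0 := smul_S ι c hc _
    have h1 : a • (c • y) = 0 := by
      rw [smul_comm a c y, ha]
      exact hcs
    have h2 : a ∈ LinearMap.ker (LinearMap.toSpanSingleton A E (c ^ (i₀ + 2) • x)) := by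
      simp only [LinearMap.mem_ker, LinearMap.toSpanSingleton_apply]
      have : c ^ (i₀ + 2) • x = c • y := by
        rw [hy, ← mul_smul, ← pow_succ']
      rw [this]
      exact h1
    have heq : LinearMap.ker (LinearMap.toSpanSingleton A E (c ^ (i₀ + 2) • x)) =
        LinearMap.ker (LinearMap.toSpanSingleton A E (c ^ (i₀ + 1) • x)) := by
      have e1 := hi₀ (i₀ + 1) (by omega)
      have e2 := hi₀ (i₀ + 2) (by omega)
      exact (e2.symm.trans e1 : _)
    rw [heq] at h2
    simp only [LinearMap.mem_ker, LinearMap.toSpanSingleton_apply] at h2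
    exact (one_ne ι hmono) (by rw [← ha]; exact h2)
  obtain ⟨n, hn⟩ := Ideal.exists_pow_le_of_le_radical_of_fg hrad
    (IsNoetherian.noetherian (𝔪 : Ideal A))
  exact ⟨n, fun r hr => by simpa [LinearMap.mem_ker] using hn hr⟩

variable (hinj : Module.Injective A E)

/-- The double-dual (into `E`) evaluation map. -/
noncomputable def evE (M : Type u) [AddCommGroup M] [Module A M] :
    M →ₗ[A] ((M →ₗ[A] E) →ₗ[A] E) :=
  (LinearMap.id : (M →ₗ[A] E) →ₗ[A] (M →ₗ[A] E)).flip

@[simp] theorem evE_apply {M : Type u} [AddCommGroup M] [Module A M] (m : M) (φ : M →ₗ[A] E) :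
    evE M m φ = φ m := rfl

include hinj in
theorem ext_lemma {M : Type u} [AddCommGroup M] [Module A M] (N : Submodule A M)
    (φ : ↥N →ₗ[A] E) : ∃ ψ : M →ₗ[A] E, ∀ x : ↥N, ψ x = φ x :=
  hinj.out N.subtype N.injective_subtype φ

theorem exists_hom_simple_to {Q : Type u} [AddCommGroup Q] [Module A Q] [IsSimpleModule A Q]
    {q : Q} (hq : q ≠ 0) {x₀ : E} (hx₀ : ∀ m ∈ 𝔪, m • x₀ = 0) :
    ∃ φ : Q →ₗ[A] E, φ q = x₀ := by
  have hker : LinearMap.ker (LinearMap.toSpanSingleton A Q q) = 𝔪 :=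
    IsLocalRing.eq_maximalIdeal (IsSimpleModule.ker_toSpanSingleton_isMaximal A hq)
  have hsurj : Function.Surjective (LinearMap.toSpanSingleton A Q q) :=
    IsSimpleModule.toSpanSingleton_surjective A hq
  have hle : LinearMap.ker (LinearMap.toSpanSingleton A Q q) ≤
      LinearMap.ker (LinearMap.toSpanSingleton A E x₀) := by
    rw [hker]
    intro m hm
    simpa [LinearMap.mem_ker] using hx₀ m hm
  set e := (LinearMap.toSpanSingleton A Q q).quotKerEquivOfSurjective hsurj with he
  refine ⟨(Submodule.liftQ _ (LinearMap.toSpanSingleton A E x₀) hle).comp e.symm.toLinearMap, ?_⟩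
  have h1 : e (Submodule.Quotient.mk (1 : A)) = q := by
    show LinearMap.toSpanSingleton A Q q 1 = q
    simp
  have h2 : e.symm q = Submodule.Quotient.mk (1 : A) := by
    rw [LinearEquiv.symm_apply_eq, h1]
  rw [LinearMap.comp_apply, LinearEquiv.coe_toLinearMap, h2, Submodule.liftQ_apply]
  simp

include hmono hess in
theorem hom_simple (Q : Type u) [AddCommGroup Q] [Module A Q] [IsSimpleModule A Q] :
    IsSimpleModule A (Q →ₗ[A] E) := by
  have : Nontrivial Q := IsSimpleModule.nontrivial A Q
  obtain ⟨q, hq⟩ := exists_ne (0 : Q)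
  have hker : LinearMap.ker (LinearMap.toSpanSingleton A Q q) = 𝔪 :=
    IsLocalRing.eq_maximalIdeal (IsSimpleModule.ker_toSpanSingleton_isMaximal A hq)
  set θ : (Q →ₗ[A] E) →ₗ[A] E := evE Q q with hθ
  have hinjθ : Function.Injective θ := by
    rw [injective_iff_map_eq_zero]
    intro φ hφ
    ext x
    obtain ⟨c, rfl⟩ := IsSimpleModule.toSpanSingleton_surjective A hq x
    show φ (c • q) = 0
    rw [map_smul]
    have : φ q = 0 := hφ
    rw [this, smul_zero]
  have hrange : LinearMap.range θ = LinearMap.range ι := by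
    apply le_antisymm
    · rintro _ ⟨φ, rfl⟩
      apply mem_S_of_m_smul ι hmono hess
      intro m hm
      show m • φ q = 0
      rw [← map_smul]
      have : m • q = 0 := by
        have : m ∈ LinearMap.ker (LinearMap.toSpanSingleton A Q q) := hker ▸ hm
        simpa using this
      rw [this, map_zero]
    · rintro _ ⟨u, rfl⟩
      obtain ⟨φ, hφ⟩ := exists_hom_simple_to (Q := Q) hq
        (x₀ := ι u) (fun m hm => smul_S ι m hm u)
      exact ⟨φ, hφ⟩
  have e := LinearEquiv.ofInjective θ hinjθ
  have : IsSimpleModule A (LinearMap.range θ) := by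
    rw [hrange]
    exact S_simple ι hmono
  exact IsSimpleModule.congr e

include hmono hess in
theorem evSurj_simple (Q : Type u) [AddCommGroup Q] [Module A Q] [IsSimpleModule A Q] :
    Function.Surjective (evE (A := A) (E := E) Q) := by
  have h1 : IsSimpleModule A (Q →ₗ[A] E) := hom_simple ι hmono hess Q
  have h2 : IsSimpleModule A ((Q →ₗ[A] E) →ₗ[A] E) := hom_simple ι hmono hess _
  have : Nontrivial Q := IsSimpleModule.nontrivial A Q
  obtain ⟨q, hq⟩ := exists_ne (0 : Q)
  have hne : LinearMap.range (evE (A := A) (E := E) Q) ≠ ⊥ := by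
    obtain ⟨φ, hφ⟩ := exists_hom_simple_to (Q := Q) hq
      (x₀ := ι (IsLocalRing.residue A 1)) (fun m hm => smul_S ι m hm _)
    intro h
    have : evE (A := A) (E := E) Q q ∈ LinearMap.range (evE (A := A) (E := E) Q) := ⟨q, rfl⟩
    rw [h, Submodule.mem_bot] at this
    apply one_ne ι hmono
    rw [← hφ]
    show evE (A := A) (E := E) Q q φ = 0
    rw [this]
    rfl
  rw [← LinearMap.range_eq_top]
  haveI := h2
  rcases eq_bot_or_eq_top (LinearMap.range (evE (A := A) (E := E) Q)) with h | h
  · exact absurd h hne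
  · exact h

include hmono hess hinj in
theorem evSurj (M : Type u) [AddCommGroup M] [Module A M] (h : IsFiniteLength A M) :
    Function.Surjective (evE (A := A) (E := E) M) := by
  induction h with
  | @of_subsingleton M _ _ _ =>
    intro Φ
    refine ⟨0, ?_⟩
    ext φ
    have hφ : φ = 0 := by
      ext x
      rw [Subsingleton.elim x 0, map_zero]
      rfl
    rw [hφ]
    simp
  | @of_simple_quotient M _ _ N _ hN ih =>
    intro Φ
    set Dπ : ((M ⧸ N) →ₗ[A] E) →ₗ[A] (M →ₗ[A] E) := LinearMap.lcomp A E N.mkQ with hDπ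
    set Dι : (M →ₗ[A] E) →ₗ[A] (↥N →ₗ[A] E) := LinearMap.lcomp A E N.subtype with hDι
    have hDι_surj : Function.Surjective Dι := by
      intro φ
      obtain ⟨ψ, hψ⟩ := ext_lemma hinj N φ
      exact ⟨ψ, LinearMap.ext hψ⟩
    obtain ⟨z, hz⟩ := evSurj_simple ι hmono hess (M ⧸ N)
      ((LinearMap.lcomp A E Dπ) Φ)
    obtain ⟨m₀, rfl⟩ := N.mkQ_surjective z
    set Φ' : (M →ₗ[A] E) →ₗ[A] E := Φ - evE (A := A) (E := E) M m₀ with hΦ'def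
    have hΦ' : ∀ ψ : (M ⧸ N) →ₗ[A] E, Φ' (ψ.comp N.mkQ) = 0 := by
      intro ψ
      have h1 : Φ (ψ.comp N.mkQ) = ψ (N.mkQ m₀) := by
        have := congrArg (fun g => g ψ) hz
        exact this.symm
      simp [hΦ'def, h1]
    have hkill : LinearMap.ker Dι ≤ LinearMap.ker Φ' := by
      intro φ hφ
      have hφ0 : ∀ x : M, x ∈ N → φ x = 0 := by
        intro x hx
        have := congrArg (fun g => g ⟨x, hx⟩) (show Dι φ = 0 from hφ)
        exact this
      have hψ : ∃ ψ : (M ⧸ N) →ₗ[A] E, ψ.comp N.mkQ = φ := by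
        refine ⟨N.liftQ φ (fun x hx => ?_), ?_⟩
        · exact hφ0 x hx
        · ext x
          simp
          rfl
      obtain ⟨ψ, hψ⟩ := hψ
      rw [LinearMap.mem_ker, ← hψ]
      exact hΦ' ψ
    set e2 := Dι.quotKerEquivOfSurjective hDι_surj with he2
    set Ψ : (↥N →ₗ[A] E) →ₗ[A] E :=
      ((LinearMap.ker Dι).liftQ Φ' hkill).comp e2.symm.toLinearMap with hΨdef
    obtain ⟨nn, hnn⟩ := ih Ψ
    refine ⟨m₀ + (nn : M), ?_⟩
    ext φ
    have hΨφ : Ψ (Dι φ) = Φ' φ := by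
      have hsym : e2.symm (Dι φ) = Submodule.Quotient.mk φ := by
        rw [LinearEquiv.symm_apply_eq]
        rfl
      rw [hΨdef]
      simp only [LinearMap.comp_apply, LinearEquiv.coe_toLinearMap, hsym,
        Submodule.liftQ_apply]
    have hΨφ' : Ψ (Dι φ) = φ (nn : M) := by
      rw [← hnn]
      rfl
    have : Φ φ - φ m₀ = φ (nn : M) := by
      rw [← hΨφ', hΨφ]
      simp [hΦ'def]
    show evE (A := A) (E := E) M (m₀ + (nn : M)) φ = Φ φ
    rw [evE_apply, map_add]
    rw [← this]
    abel

end withι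

theorem art_of_torsion (V : Type u) [AddCommGroup V] [Module A V] [Module.Finite A V]
    (htor : ∀ m ∈ 𝔪, ∀ v : V, m • v = 0) : IsArtinian A V := by
  have hT : Module.IsTorsionBySet A V ((𝔪 : Ideal A) : Set A) := fun x a => htor a a.2 x
  letI : Module (A ⧸ (𝔪 : Ideal A)) V := hT.module
  haveI : IsScalarTower A (A ⧸ (𝔪 : Ideal A)) V := hT.isScalarTower
  haveI : Module.Finite (A ⧸ (𝔪 : Ideal A)) V :=
    Module.Finite.of_restrictScalars_finite A _ V
  haveI : IsArtinianRing (A ⧸ (𝔪 : Ideal A)) := by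
    letI := Ideal.Quotient.field (𝔪 : Ideal A)
    exact DivisionRing.instIsArtinianRing
  haveI : IsArtinian (A ⧸ (𝔪 : Ideal A)) V := isArtinian_of_fg_of_artinian'
  let e : Submodule A V ↪o Submodule (A ⧸ (𝔪 : Ideal A)) V :=
    { toFun := fun P =>
        { carrier := (P : Set V)
          add_mem' := fun h1 h2 => P.add_mem h1 h2
          zero_mem' := P.zero_mem
          smul_mem' := by
            intro c x hx
            obtain ⟨b, rfl⟩ := Ideal.Quotient.mk_surjective c
            rw [hT.mk_smul]
            exact P.smul_mem b hx }
      inj' := by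
        intro P P' h
        apply SetLike.ext'
        exact congrArg (fun (W : Submodule (A ⧸ (𝔪 : Ideal A)) V) => (W : Set V)) h
      map_rel_iff' := Iff.rfl }
  exact ⟨e.wellFounded (IsWellFounded.wf)⟩

theorem finLen (n : ℕ) : IsFiniteLength A (A ⧸ (𝔪 ^ n : Ideal A)) := by
  rw [isFiniteLength_iff_isNoetherian_isArtinian]
  constructor
  · infer_instance
  · induction n with
    | zero =>
      have h0 : (𝔪 ^ 0 : Ideal A) = ⊤ := by rw [pow_zero, Ideal.one_eq_top]
      have : Subsingleton (A ⧸ (𝔪 ^ 0 : Ideal A)) :=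
        Submodule.Quotient.subsingleton_iff.mpr h0
      infer_instance
    | succ n ihn =>
      rw [isArtinian_iff_submodule_quotient
        (Submodule.map (𝔪 ^ (n+1) : Ideal A).mkQ (𝔪 ^ n : Ideal A))]
      constructor
      · -- torsion finitely generated part
        haveI : Module.Finite A
            ↥(Submodule.map (𝔪 ^ (n+1) : Ideal A).mkQ (𝔪 ^ n : Ideal A)) := by
          rw [Module.Finite.iff_fg]
          exact Submodule.FG.map _ (IsNoetherian.noetherian _)
        apply art_of_torsion
        intro m hm v
        obtain ⟨w, hw, hv⟩ := v.2
        apply Subtype.ext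
        show m • (v : A ⧸ (𝔪 ^ (n+1) : Ideal A)) = 0
        rw [← hv, ← map_smul, Submodule.mkQ_apply, Submodule.Quotient.mk_eq_zero]
        have h1 : m * w ∈ (𝔪 : Ideal A) * (𝔪 ^ n : Ideal A) := Ideal.mul_mem_mul hm hw
        rw [← pow_succ'] at h1
        simpa [smul_eq_mul] using h1
      · -- quotient part
        have hle : (𝔪 ^ (n+1) : Ideal A) ≤ (𝔪 ^ n : Ideal A) :=
          Ideal.pow_le_pow_right (by omega)
        exact isArtinian_of_linearEquiv
          (Submodule.quotientQuotientEquivQuotient _ _ hle).symm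

section withι2

variable (ι : IsLocalRing.ResidueField A →ₗ[A] E)
  (hmono : Function.Injective ι)
  (hess : ∀ W : Submodule A E, W ≠ ⊥ → LinearMap.range ι ⊓ W ≠ ⊥)
  (hinj : Module.Injective A E)

include hmono hess hinj in
theorem faithful (n : ℕ) (a : A)
    (h : ∀ e : E, (∀ r ∈ (𝔪 ^ n : Ideal A), r • e = 0) → a • e = 0) :
    a ∈ (𝔪 ^ n : Ideal A) := by
  by_contra ha
  set M := A ⧸ (𝔪 ^ n : Ideal A) with hM
  set ab : M := Submodule.Quotient.mk a with hab
  have habne : ab ≠ 0 := by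
    rw [hab, Ne, Submodule.Quotient.mk_eq_zero]; exact ha
  set N₀ : Submodule A M := A ∙ ab with hN₀def
  have hN₀ : ab ∈ N₀ := Submodule.mem_span_singleton_self ab
  have habN : (⟨ab, hN₀⟩ : ↥N₀) ≠ 0 := by
    intro h'
    exact habne (by simpa using congrArg Subtype.val h')
  have hspan : (⊤ : Submodule A ↥N₀) ≤ A ∙ (⟨ab, hN₀⟩ : ↥N₀) := by
    rintro ⟨x, hx⟩ -
    obtain ⟨c, hc⟩ := Submodule.mem_span_singleton.mp hx
    refine Submodule.mem_span_singleton.mpr ⟨c, ?_⟩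
    apply Subtype.ext
    simpa using hc
  -- find a maximal proper submodule of N₀
  obtain ⟨P, hPmem, hPmax⟩ := set_has_maximal_iff_noetherian.mpr
    (inferInstance : IsNoetherian A ↥N₀) {P : Submodule A ↥N₀ | P ≠ ⊤}
    ⟨⊥, by
      intro h'
      have hmem : (⟨ab, hN₀⟩ : ↥N₀) ∈ (⊥ : Submodule A ↥N₀) := by rw [h']; trivial
      exact habN ((Submodule.mem_bot _).mp hmem)⟩
  have hcoatom : IsCoatom P := by
    constructor
    · exact hPmem
    · intro Q hPQ
      by_contra hQ
      exact hPmax Q hQ hPQ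
  haveI : IsSimpleModule A (↥N₀ ⧸ P) := isSimpleModule_iff_isCoatom.mpr hcoatom
  set q : ↥N₀ ⧸ P := P.mkQ ⟨ab, hN₀⟩ with hq
  have hqne : q ≠ 0 := by
    rw [hq, Submodule.mkQ_apply, Ne, Submodule.Quotient.mk_eq_zero]
    intro hmem
    apply hPmem
    rw [eq_top_iff]
    exact le_trans hspan ((Submodule.span_singleton_le_iff_mem _ _).mpr hmem)
  obtain ⟨φ₁, hφ₁⟩ := exists_hom_simple_to (Q := ↥N₀ ⧸ P) hqne
    (x₀ := ι (IsLocalRing.residue A 1)) (fun m hm => smul_S ι m hm _)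
  obtain ⟨ψ, hψ⟩ := ext_lemma hinj N₀ (φ₁.comp P.mkQ)
  set e₀ := ψ (Submodule.Quotient.mk (1 : A)) with he₀
  have htor : ∀ r ∈ (𝔪 ^ n : Ideal A), r • e₀ = 0 := by
    intro r hr
    rw [he₀, ← map_smul]
    have : r • (Submodule.Quotient.mk (1 : A) : M) = Submodule.Quotient.mk r := by
      rw [← Submodule.Quotient.mk_smul, smul_eq_mul, mul_one]
    rw [this]
    have : (Submodule.Quotient.mk r : M) = 0 := (Submodule.Quotient.mk_eq_zero _).mpr hr
    rw [this, map_zero]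
  have hae₀ : a • e₀ = ι (IsLocalRing.residue A 1) := by
    rw [he₀, ← map_smul]
    have h1 : a • (Submodule.Quotient.mk (1 : A) : M) = ab := by
      rw [hab, ← Submodule.Quotient.mk_smul, smul_eq_mul, mul_one]
    rw [h1]
    have h3 := hψ ⟨ab, hN₀⟩
    rw [show ψ ab = ψ (((⟨ab, hN₀⟩ : ↥N₀) : M)) from rfl, h3]
    show φ₁ (P.mkQ ⟨ab, hN₀⟩) = _
    rw [← hq, hφ₁]
  have := h e₀ htor
  rw [hae₀] at this
  exact one_ne ι hmono this

include hmono hess hinj in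
theorem end_smul (f : E →ₗ[A] E) (n : ℕ) :
    ∃ a : A, ∀ e : E, (∀ r ∈ (𝔪 ^ n : Ideal A), r • e = 0) → f e = a • e := by
  set M := A ⧸ (𝔪 ^ n : Ideal A) with hM
  set Φ : (M →ₗ[A] E) →ₗ[A] E :=
    f ∘ₗ (evE (A := A) (E := E) M (Submodule.Quotient.mk (1 : A))) with hΦ
  obtain ⟨z, hz⟩ := evSurj ι hmono hess hinj M (finLen n) Φ
  obtain ⟨a, ha⟩ := Submodule.Quotient.mk_surjective _ z
  refine ⟨a, fun e he => ?_⟩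
  have hker : (𝔪 ^ n : Ideal A) ≤ LinearMap.ker (LinearMap.toSpanSingleton A E e) := by
    intro r hr
    simpa [LinearMap.mem_ker] using he r hr
  set φe : M →ₗ[A] E := Submodule.liftQ _ (LinearMap.toSpanSingleton A E e) hker with hφe
  have h2 := congrArg (fun g => g φe) hz
  have h3 : evE (A := A) (E := E) M z φe = φe z := rfl
  have h4 : Φ φe = f (φe (Submodule.Quotient.mk (1 : A))) := rfl
  have h5 : φe (Submodule.Quotient.mk (1 : A)) = e := by
    rw [hφe, Submodule.liftQ_apply]
    simp
  have h6 : φe z = a • e := by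
    rw [← ha, hφe, Submodule.liftQ_apply]
    rfl
  rw [h3, h4, h5, h6] at h2
  exact h2.symm

end withι2

end MatlisAux


/-- Matlis duality at the level of endomorphisms: if `(A, 𝔪, k)` is a commutative noetherian
local ring and `E` is an injective hull of the residue field `k`, then the canonical map
from the `𝔪`-adic completion of `A` to `Hom_A(E, E)`, sending `a` to multiplication by `a`,
is an isomorphism of rings; equivalently, `Hom_A(E,E)` is isomorphic, as an `A`-algebra, to
the `𝔪`-adic completion of `A`. -/
theorem adicCompletion_algEquiv_end_of_injective_hull_residueField
    {A : Type u} [CommRing A] [IsNoetherianRing A] [IsLocalRing A]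
    (E : Type u) [AddCommGroup E] [Module A E]
    (hinj : Module.Injective A E)
    (ι : IsLocalRing.ResidueField A →ₗ[A] E)
    (hmono : Function.Injective ι)
    (hess : ∀ W : Submodule A E, W ≠ ⊥ → LinearMap.range ι ⊓ W ≠ ⊥) :
    Nonempty (AdicCompletion (IsLocalRing.maximalIdeal A) A ≃ₐ[A] Module.End A E) := by
  classical
  set m : Ideal A := IsLocalRing.maximalIdeal A with hm
  have hJ : ∀ n : ℕ, (m ^ n • ⊤ : Ideal A) = m ^ n := by
    intro n; rw [smul_eq_mul, Ideal.mul_top]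
  -- torsion levels
  choose lev hlev using MatlisAux.torsion ι hmono hess
  -- lifts of quotient elements
  have hmks : ∀ (n : ℕ) (u : A ⧸ (m ^ n • ⊤ : Ideal A)), ∃ a : A, Ideal.Quotient.mk _ a = u :=
    fun n u => Ideal.Quotient.mk_surjective u
  choose lft hlft using hmks
  -- well-definedness
  have key : ∀ (x : AdicCompletion m A) (e : E) (n m' : ℕ) (a b : A),
      (∀ r ∈ (m ^ n : Ideal A), r • e = 0) →
      Ideal.Quotient.mk (m ^ n • ⊤ : Ideal A) a = x.val n →
      (∀ r ∈ (m ^ m' : Ideal A), r • e = 0) →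
      Ideal.Quotient.mk (m ^ m' • ⊤ : Ideal A) b = x.val m' →
      a • e = b • e := by
    have main : ∀ (x : AdicCompletion m A) (e : E) (n m' : ℕ), n ≤ m' → ∀ (a b : A),
        (∀ r ∈ (m ^ n : Ideal A), r • e = 0) →
        Ideal.Quotient.mk (m ^ n • ⊤ : Ideal A) a = x.val n →
        Ideal.Quotient.mk (m ^ m' • ⊤ : Ideal A) b = x.val m' →
        a • e = b • e := by
      intro x e n m' hnm a b htor hax hbx
      have h1 : AdicCompletion.transitionMap m A hnm (x.val m') = x.val n := x.property hnm
      have h2 : AdicCompletion.transitionMap m A hnm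
          (Ideal.Quotient.mk (m ^ m' • ⊤ : Ideal A) b) =
          Ideal.Quotient.mk (m ^ n • ⊤ : Ideal A) b :=
        AdicCompletion.transitionMap_ideal_mk m hnm b
      have h3 : Ideal.Quotient.mk (m ^ n • ⊤ : Ideal A) a =
          Ideal.Quotient.mk (m ^ n • ⊤ : Ideal A) b := by
        rw [hax, ← h1, ← hbx, h2]
      have h4 : a - b ∈ (m ^ n : Ideal A) := by
        rw [← hJ n]
        exact (Ideal.Quotient.mk_eq_mk_iff_sub_mem a b).mp h3
      have h5 : (a - b) • e = 0 := htor _ h4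
      rw [sub_smul, sub_eq_zero] at h5
      exact h5
    intro x e n m' a b h1 h2 h3 h4
    rcases le_total n m' with h | h
    · exact main x e n m' h a b h1 h2 h4
    · exact (main x e m' n h b a h3 h4 h2).symm
  set act : AdicCompletion m A → E → E := fun x e => lft (lev e) (x.val (lev e)) • e with hact_def
  have hact : ∀ (x : AdicCompletion m A) (e : E) (n : ℕ) (a : A),
      (∀ r ∈ (m ^ n : Ideal A), r • e = 0) →
      Ideal.Quotient.mk (m ^ n • ⊤ : Ideal A) a = x.val n → act x e = a • e := by
    intro x e n a h1 h2
    exact key x e (lev e) n _ a (hlev e) (hlft _ _) h1 h2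
  have hpowle : ∀ {n n' : ℕ}, n ≤ n' → ∀ (e : E), (∀ r ∈ (m ^ n : Ideal A), r • e = 0) →
      (∀ r ∈ (m ^ n' : Ideal A), r • e = 0) :=
    fun hnn' e he r hr => he r (Ideal.pow_le_pow_right hnn' hr)
  -- linearity of act x
  have hlin : ∀ x : AdicCompletion m A, ∃ g : Module.End A E, ∀ e, g e = act x e := by
    intro x
    refine ⟨⟨⟨act x, ?_⟩, ?_⟩, fun _ => rfl⟩
    · intro e1 e2
      set n := max (lev e1) (lev e2) with hn
      have t1 := hpowle (le_max_left (lev e1) (lev e2)) e1 (hlev e1)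
      have t2 := hpowle (le_max_right (lev e1) (lev e2)) e2 (hlev e2)
      have t12 : ∀ r ∈ (m ^ n : Ideal A), r • (e1 + e2) = 0 := by
        intro r hr
        rw [smul_add, t1 r hr, t2 r hr, add_zero]
      rw [hact x (e1 + e2) n _ t12 (hlft _ _), hact x e1 n _ t1 (hlft _ _),
        hact x e2 n _ t2 (hlft _ _), smul_add]
    · intro c e
      simp only [RingHom.id_apply]
      have tce : ∀ r ∈ (m ^ (lev e) : Ideal A), r • (c • e) = 0 := by
        intro r hr
        rw [smul_comm, hlev e r hr, smul_zero]
      rw [hact x (c • e) (lev e) _ tce (hlft _ _)]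
      show _ = c • act x e
      rw [hact x e (lev e) _ (hlev e) (hlft _ _), smul_comm]
  choose Θf hΘf using hlin
  have hΘact : ∀ (x : AdicCompletion m A) (e : E) (n : ℕ) (a : A),
      (∀ r ∈ (m ^ n : Ideal A), r • e = 0) →
      Ideal.Quotient.mk (m ^ n • ⊤ : Ideal A) a = x.val n → Θf x e = a • e := by
    intro x e n a h1 h2
    rw [hΘf x e]
    exact hact x e n a h1 h2
  -- Θ is an algebra homomorphism
  have hval_mk : ∀ (n : ℕ) (a : A),
      Ideal.Quotient.mk (m ^ n • ⊤ : Ideal A) a =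
        (algebraMap A (AdicCompletion m A) a).val n := fun n a => rfl
  set Θ : AdicCompletion m A →ₐ[A] Module.End A E :=
    { toFun := Θf
      map_one' := by
        apply LinearMap.ext
        intro e
        rw [hΘact 1 e (lev e) 1 (hlev e) rfl, one_smul]
        rfl
      map_mul' := by
        intro x y
        apply LinearMap.ext
        intro e
        set n := lev e
        set a := lft n (x.val n)
        set b := lft n (y.val n)
        have hxy : Ideal.Quotient.mk (m ^ n • ⊤ : Ideal A) (a * b) = (x * y).val n := by
          rw [map_mul, hlft, hlft]
          rfl
        have tbe : ∀ r ∈ (m ^ n : Ideal A), r • (b • e) = 0 := by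
          intro r hr
          rw [smul_comm, hlev e r hr, smul_zero]
        have h1 : Θf (x * y) e = (a * b) • e := hΘact (x * y) e n (a * b) (hlev e) hxy
        have h2 : Θf y e = b • e := hΘact y e n b (hlev e) (hlft _ _)
        show Θf (x * y) e = Θf x (Θf y e)
        rw [h1, h2, hΘact x (b • e) n a tbe (hlft _ _), mul_smul]
      map_zero' := by
        apply LinearMap.ext
        intro e
        rw [hΘact 0 e (lev e) 0 (hlev e) (by rw [map_zero]; rfl), zero_smul]
        rfl
      map_add' := by
        intro x y
        apply LinearMap.ext
        intro e
        set n := lev e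
        set a := lft n (x.val n)
        set b := lft n (y.val n)
        have hxy : Ideal.Quotient.mk (m ^ n • ⊤ : Ideal A) (a + b) = (x + y).val n := by
          rw [map_add, hlft, hlft]
          rfl
        show Θf (x + y) e = Θf x e + Θf y e
        rw [hΘact (x + y) e n (a + b) (hlev e) hxy, hΘact x e n a (hlev e) (hlft _ _),
          hΘact y e n b (hlev e) (hlft _ _), add_smul]
      commutes' := by
        intro r
        apply LinearMap.ext
        intro e
        show Θf (algebraMap A (AdicCompletion m A) r) e = algebraMap A (Module.End A E) r e
        rw [hΘact _ e (lev e) r (hlev e) (hval_mk _ r), Module.algebraMap_end_apply] }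
    with hΘ
  have hΘinj : Function.Injective Θ := by
    rw [injective_iff_map_eq_zero]
    intro x hx
    apply Subtype.ext
    funext n
    show x.val n = (0 : AdicCompletion m A).val n
    set a := lft n (x.val n)
    have hmem : a ∈ (m ^ n : Ideal A) := by
      apply MatlisAux.faithful ι hmono hess hinj n a
      intro e he
      have h1 : Θf x e = a • e := hΘact x e n a he (hlft _ _)
      have h2 : Θf x e = 0 := by
        rw [show Θf x = (0 : Module.End A E) from hx]
        rfl
      rw [← h1, h2]
    have : Ideal.Quotient.mk (m ^ n • ⊤ : Ideal A) a = 0 := by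
      rw [Ideal.Quotient.eq_zero_iff_mem, hJ n]
      exact hmem
    rw [← hlft n (x.val n), this]
    rfl
  have hΘsurj : Function.Surjective Θ := by
    intro f
    obtain ⟨s, hs⟩ := by
      exact Classical.axiomOfChoice
        (fun n : ℕ => MatlisAux.end_smul ι hmono hess hinj (f : E →ₗ[A] E) n)
    have hcompat : ∀ {n n' : ℕ} (hnn' : n ≤ n'),
        AdicCompletion.transitionMap m A hnn'
          (Ideal.Quotient.mk (m ^ n' • ⊤ : Ideal A) (s n')) =
          Ideal.Quotient.mk (m ^ n • ⊤ : Ideal A) (s n) := by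
      intro n n' hnn'
      rw [AdicCompletion.transitionMap_ideal_mk]
      rw [Ideal.Quotient.mk_eq_mk_iff_sub_mem, hJ n]
      apply MatlisAux.faithful ι hmono hess hinj n (s n' - s n)
      intro e he
      have he' := hpowle hnn' e he
      rw [sub_smul, ← hs n' e he', ← hs n e he, sub_self]
    set x : AdicCompletion m A :=
      ⟨fun n => Ideal.Quotient.mk (m ^ n • ⊤ : Ideal A) (s n), fun {n n'} h => hcompat h⟩
      with hxdef
    refine ⟨x, ?_⟩
    apply LinearMap.ext
    intro e
    show Θf x e = f e
    rw [hΘact x e (lev e) (s (lev e)) (hlev e) rfl]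
    exact (hs (lev e) e (hlev e)).symm
  exact ⟨AlgEquiv.ofBijective Θ ⟨hΘinj, hΘsurj⟩⟩
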